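/- Let R_F be the class of end-token rewards r_f(x,y) = 1{y[-1] = f^AR(x)[-1]} induced by a VC class F. Then VC(R_F) ≤ 6 · T · VC(F). -/

import Mathlib

/-- Autoregressive unrolling of a next-token predictor. -/
def arList (f : List Bool → Bool) (x : List Bool) : ℕ → List Bool
  | 0 => []
  | T + 1 => arList f x T ++ [f (x ++ arList f x T)]

/-- `H` shatters the points `xs`. -/
def Shatters {α : Type*} (H : Set (α → Bool)) {n : ℕ} (xs : Fin n → α) : Prop :=
  ∀ v : Fin n → Bool, ∃ h ∈ H, ∀ i, h (xs i) = v i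

/-- The VC dimension of `H` is at most `d : ℕ`. -/
def VCdimLe {α : Type*} (H : Set (α → Bool)) (d : ℕ) : Prop :=
  ∀ n (xs : Fin n → α), Shatters H xs → n ≤ d

/-- The class of end-token rewards `r_f(x,y) = 1{y[-1] = f^AR(x)[-1]}` induced by `F`. -/
def rewardClassET (F : Set (List Bool → Bool)) (T : ℕ) :
    Set (List Bool × List Bool → Bool) :=
  {g | ∃ f ∈ F, g = fun p => decide (p.2.getLastD false = (arList f p.1 T).getLastD false)}

open Finset

/- ### Auxiliary lemmas -/

lemma arList_length (f : List Bool → Bool) (x : List Bool) : ∀ T, (arList f x T).length = T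
  | 0 => rfl
  | T + 1 => by simp [arList, arList_length f x T]

lemma arList_congr {f g : List Bool → Bool} {x : List Bool} {T : ℕ}
    (h : ∀ q : List Bool, q.length < T → f (x ++ q) = g (x ++ q)) :
    arList f x T = arList g x T := by
  suffices H : ∀ t, t ≤ T → arList f x t = arList g x t from H T le_rfl
  intro t ht
  induction t with
  | zero => rfl
  | succ t ih =>
    have ht' : t ≤ T := by omega
    have e := ih ht'
    have hlen : (arList g x t).length < T := by rw [arList_length]; omega
    show arList f x t ++ [f (x ++ arList f x t)] = arList g x t ++ [g (x ++ arList g x t)]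
    rw [e, h _ hlen]

/-- Finset of all Bool lists of length `< T`. -/
def listsLt : ℕ → Finset (List Bool)
  | 0 => ∅
  | T + 1 => insert [] (((listsLt T).image (List.cons false)) ∪ ((listsLt T).image (List.cons true)))

lemma mem_listsLt : ∀ T (l : List Bool), l ∈ listsLt T ↔ l.length < T
  | 0, l => by simp [listsLt]
  | T + 1, l => by
    simp only [listsLt, mem_insert, mem_union, mem_image]
    constructor
    · rintro (rfl | ⟨m, hm, rfl⟩ | ⟨m, hm, rfl⟩) <;>
        simp_all [mem_listsLt T]
    · intro hl
      cases l with
      | nil => exact Or.inl rfl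
      | cons b m =>
        have hm : m.length < T := by simpa using Nat.lt_of_succ_lt_succ hl
        cases b
        · exact Or.inr (Or.inl ⟨m, (mem_listsLt T m).2 hm, rfl⟩)
        · exact Or.inr (Or.inr ⟨m, (mem_listsLt T m).2 hm, rfl⟩)

lemma card_listsLt : ∀ T, (listsLt T).card + 1 ≤ 2 ^ T
  | 0 => by simp [listsLt]
  | T + 1 => by
    have h := card_listsLt T
    have h1 : (listsLt (T + 1)).card ≤
        (((listsLt T).image (List.cons false)) ∪ ((listsLt T).image (List.cons true))).card + 1 := by
      rw [listsLt]; exact card_insert_le _ _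
    have h2 := card_union_le ((listsLt T).image (List.cons false)) ((listsLt T).image (List.cons true))
    have c1 := card_image_le (s := listsLt T) (f := List.cons false)
    have c2 := card_image_le (s := listsLt T) (f := List.cons true)
    have hp : 2 ^ (T + 1) = 2 * 2 ^ T := by ring
    omega

/- ### Arithmetic lemmas -/

lemma pow_le_three_pow_mul_factorial {d i : ℕ} (_h : i ≤ d) :
    d ^ i ≤ 3 ^ d * Nat.factorial i := by
  have hfac : (0:ℝ) < ((Nat.factorial i : ℕ) : ℝ) := by exact_mod_cast i.factorial_pos
  have h1 : ((d:ℝ) ^ i / ((Nat.factorial i : ℕ) : ℝ)) ≤ Real.exp d :=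
    Real.pow_div_factorial_le_exp _ (by positivity) i
  have h2 : Real.exp d ≤ 3 ^ d := by
    have he : Real.exp (d : ℝ) = Real.exp 1 ^ d := by
      rw [show ((d:ℝ)) = (d:ℝ) * 1 by ring, Real.exp_nat_mul]
    rw [he]
    exact pow_le_pow_left₀ (Real.exp_pos 1).le
      (le_of_lt (lt_trans Real.exp_one_lt_d9 (by norm_num))) d
  have h3 : ((d:ℝ) ^ i) ≤ 3 ^ d * ((Nat.factorial i : ℕ) : ℝ) := by
    rw [div_le_iff₀ hfac] at h1
    calc ((d:ℝ) ^ i) ≤ Real.exp d * ((Nat.factorial i : ℕ) : ℝ) := h1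
      _ ≤ 3 ^ d * ((Nat.factorial i : ℕ) : ℝ) := mul_le_mul_of_nonneg_right h2 hfac.le
  exact_mod_cast h3

lemma dd_choose_le {d i M : ℕ} (hid : i ≤ d) (hdM : d ≤ M) :
    d ^ d * M.choose i ≤ 3 ^ d * M ^ d := by
  have h1 : Nat.factorial i * M.choose i ≤ M ^ i := by
    rw [← Nat.descFactorial_eq_factorial_mul_choose]
    exact Nat.descFactorial_le_pow M i
  have h2 : d ^ i ≤ 3 ^ d * Nat.factorial i := pow_le_three_pow_mul_factorial hid
  have hdsplit : d ^ (d - i) * d ^ i = d ^ d := by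
    rw [← pow_add, Nat.sub_add_cancel hid]
  have hMsplit : M ^ (d - i) * M ^ i = M ^ d := by
    rw [← pow_add, Nat.sub_add_cancel hid]
  calc d ^ d * M.choose i = d ^ (d - i) * (d ^ i * M.choose i) := by
        rw [← mul_assoc, hdsplit]
    _ ≤ M ^ (d - i) * ((3 ^ d * Nat.factorial i) * M.choose i) := by
        gcongr
    _ = 3 ^ d * (M ^ (d - i) * (Nat.factorial i * M.choose i)) := by ring
    _ ≤ 3 ^ d * (M ^ (d - i) * M ^ i) := by gcongr
    _ = 3 ^ d * M ^ d := by rw [hMsplit]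

lemma sum_choose_le {d M : ℕ} (hdM : d ≤ M) :
    d ^ d * ∑ i ∈ range (d + 1), M.choose i ≤ (d + 1) * (3 ^ d * M ^ d) := by
  rw [mul_sum]
  calc ∑ i ∈ range (d + 1), d ^ d * M.choose i
      ≤ ∑ _i ∈ range (d + 1), 3 ^ d * M ^ d := by
        apply sum_le_sum
        intro i hi
        exact dd_choose_le (by simp at hi; omega) hdM
    _ = (d + 1) * (3 ^ d * M ^ d) := by
        rw [sum_const, card_range, smul_eq_mul]

lemma two_mul_geom (k : ℕ) : 2 * ∑ i ∈ range k, 3 ^ i + 1 = 3 ^ k := by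
  induction k with
  | zero => simp
  | succ k ih =>
    rw [sum_range_succ, pow_succ]
    linarith

lemma succ_pow_le {n d : ℕ} (h : 3 * d ≤ n) : (n + 1) ^ d ≤ 2 * n ^ d := by
  have hC : ∀ i ∈ range (d + 1), 3 ^ d * (n ^ i * 1 ^ (d - i) * d.choose i) ≤ 3 ^ i * n ^ d := by
    intro i hi
    have hid : i ≤ d := by simp at hi; omega
    have h1 : d.choose i ≤ d ^ (d - i) := by
      rw [← Nat.choose_symm hid]
      exact Nat.choose_le_pow d (d - i)
    have h3split : (3:ℕ) ^ d = 3 ^ (d - i) * 3 ^ i := by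
      rw [← pow_add, Nat.sub_add_cancel hid]
    have hnsplit : n ^ (d - i) * n ^ i = n ^ d := by
      rw [← pow_add, Nat.sub_add_cancel hid]
    calc 3 ^ d * (n ^ i * 1 ^ (d - i) * d.choose i)
        = (3 ^ (d - i) * d.choose i) * (3 ^ i * n ^ i) := by
          rw [one_pow, h3split]; ring
      _ ≤ (3 ^ (d - i) * d ^ (d - i)) * (3 ^ i * n ^ i) := by gcongr
      _ = (3 * d) ^ (d - i) * (3 ^ i * n ^ i) := by rw [mul_pow]
      _ ≤ n ^ (d - i) * (3 ^ i * n ^ i) := by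
          gcongr
      _ = 3 ^ i * (n ^ (d - i) * n ^ i) := by ring
      _ = 3 ^ i * n ^ d := by rw [hnsplit]
  have hB : 3 ^ d * (n + 1) ^ d ≤ (∑ i ∈ range (d + 1), 3 ^ i) * n ^ d := by
    rw [add_pow, mul_sum]
    calc ∑ i ∈ range (d + 1), 3 ^ d * (n ^ i * 1 ^ (d - i) * d.choose i)
        ≤ ∑ i ∈ range (d + 1), 3 ^ i * n ^ d := sum_le_sum hC
      _ = (∑ i ∈ range (d + 1), 3 ^ i) * n ^ d := by rw [sum_mul]
  have hg := two_mul_geom (d + 1)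
  have h2 : (3:ℕ) ^ d * (2 * (n + 1) ^ d) ≤ 3 ^ d * (4 * n ^ d) := by
    calc (3:ℕ) ^ d * (2 * (n + 1) ^ d) = 2 * (3 ^ d * (n + 1) ^ d) := by ring
      _ ≤ 2 * ((∑ i ∈ range (d + 1), 3 ^ i) * n ^ d) := Nat.mul_le_mul_left 2 hB
      _ = (2 * ∑ i ∈ range (d + 1), 3 ^ i) * n ^ d := by ring
      _ ≤ 3 ^ (d + 1) * n ^ d := Nat.mul_le_mul_right _ (by linarith)
      _ = 3 ^ d * (3 * n ^ d) := by ring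
      _ ≤ 3 ^ d * (4 * n ^ d) := by
          exact Nat.mul_le_mul_left _ (Nat.mul_le_mul_right _ (by norm_num))
  have h3 : 2 * (n + 1) ^ d ≤ 4 * n ^ d :=
    Nat.le_of_mul_le_mul_left h2 (by positivity)
  omega

lemma d21_lt (d : ℕ) : (d + 1) * 21 ^ d < 2 * 32 ^ d := by
  induction d with
  | zero => norm_num
  | succ d ih =>
    rcases Nat.eq_zero_or_pos d with rfl | hd
    · norm_num
    · have h21 : 21 * (d + 2) ≤ 32 * (d + 1) := by omega
      calc (d + 1 + 1) * 21 ^ (d + 1) = (21 * (d + 2)) * 21 ^ d := by ring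
        _ ≤ (32 * (d + 1)) * 21 ^ d := Nat.mul_le_mul_right _ h21
        _ = 32 * ((d + 1) * 21 ^ d) := by ring
        _ < 32 * (2 * 32 ^ d) := by
            exact mul_lt_mul_of_pos_left ih (by norm_num)
        _ = 2 * 32 ^ (d + 1) := by ring

lemma mul32_le (T : ℕ) (hT : 1 ≤ T) : 32 * T ≤ 32 ^ T := by
  induction T with
  | zero => omega
  | succ T ih =>
    rcases Nat.eq_zero_or_pos T with rfl | hT'
    · norm_num
    · have h1 := ih hT'
      have h2 : 32 ≤ 32 ^ T := by
        calc (32:ℕ) = 32 ^ 1 := by norm_num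
          _ ≤ 32 ^ T := Nat.pow_le_pow_right (by norm_num) hT'
      calc 32 * (T + 1) = 32 * T + 32 := by ring
        _ ≤ 32 ^ T + 32 ^ T := Nat.add_le_add h1 h2
        _ ≤ 32 * 32 ^ T := by linarith
        _ = 32 ^ (T + 1) := by ring

lemma key_ineq (T d : ℕ) (hT : 1 ≤ T) (hd : 1 ≤ d) :
    ∀ n, 6 * T * d + 1 ≤ n → (d + 1) * 3 ^ d * (n * 2 ^ T) ^ d < 2 ^ n * d ^ d := by
  intro n hn
  induction n, hn using Nat.le_induction with
  | base =>
    have hk : 1 ≤ T * d := Nat.mul_le_mul hT hd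
    have h1 : 6 * T * d + 1 ≤ 7 * (T * d) := by
      calc 6 * T * d + 1 = 6 * (T * d) + 1 := by ring
        _ ≤ 6 * (T * d) + T * d := by linarith
        _ = 7 * (T * d) := by ring
    have hb1 : ((6 * T * d + 1) * 2 ^ T) ^ d ≤ ((7 * (T * d)) * 2 ^ T) ^ d :=
      Nat.pow_le_pow_left (Nat.mul_le_mul_right _ h1) d
    have hb2 : (d + 1) * 3 ^ d * ((7 * (T * d)) * 2 ^ T) ^ d
        = ((d + 1) * 21 ^ d) * ((T ^ d * (2 ^ T) ^ d) * d ^ d) := by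
      rw [show (21:ℕ) = 3 * 7 from rfl, mul_pow, mul_pow, mul_pow, mul_pow]
      ring
    have hpos : 0 < (T ^ d * (2 ^ T) ^ d) * d ^ d := by positivity
    have hb3 : ((d + 1) * 21 ^ d) * ((T ^ d * (2 ^ T) ^ d) * d ^ d)
        < (2 * 32 ^ d) * ((T ^ d * (2 ^ T) ^ d) * d ^ d) :=
      mul_lt_mul_of_pos_right (d21_lt d) hpos
    have hb4 : (2 * 32 ^ d) * ((T ^ d * (2 ^ T) ^ d) * d ^ d) ≤ 2 ^ (6 * T * d + 1) * d ^ d := by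
      have h32 : 32 ^ d * T ^ d ≤ (32 ^ T) ^ d := by
        rw [← mul_pow]
        exact Nat.pow_le_pow_left (mul32_le T hT) d
      calc (2 * 32 ^ d) * ((T ^ d * (2 ^ T) ^ d) * d ^ d)
          = 2 * ((32 ^ d * T ^ d) * (2 ^ T) ^ d * d ^ d) := by ring
        _ ≤ 2 * (((32 ^ T) ^ d) * (2 ^ T) ^ d * d ^ d) := by gcongr
        _ = 2 ^ (6 * T * d + 1) * d ^ d := by
            rw [show (32:ℕ) = 2 ^ 5 from by norm_num, ← pow_mul, ← pow_mul, ← pow_mul]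
            rw [show 2 ^ (6 * T * d + 1) = 2 * (2 ^ (5 * T * d) * 2 ^ (T * d)) from by
              rw [← pow_add]; ring_nf]
            ring_nf
      -- end calc
    calc (d + 1) * 3 ^ d * ((6 * T * d + 1) * 2 ^ T) ^ d
        ≤ (d + 1) * 3 ^ d * ((7 * (T * d)) * 2 ^ T) ^ d := Nat.mul_le_mul_left _ hb1
      _ = ((d + 1) * 21 ^ d) * ((T ^ d * (2 ^ T) ^ d) * d ^ d) := hb2
      _ < (2 * 32 ^ d) * ((T ^ d * (2 ^ T) ^ d) * d ^ d) := hb3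
      _ ≤ 2 ^ (6 * T * d + 1) * d ^ d := hb4
  | succ n hn ih =>
    have hTd : d ≤ T * d := Nat.le_mul_of_pos_left d hT
    have h3d : 3 * d ≤ n := by
      have : 6 * T * d = 6 * (T * d) := by ring
      nlinarith
    have hstep : (n + 1) ^ d ≤ 2 * n ^ d := succ_pow_le h3d
    calc (d + 1) * 3 ^ d * ((n + 1) * 2 ^ T) ^ d
        = (d + 1) * 3 ^ d * ((n + 1) ^ d * (2 ^ T) ^ d) := by rw [mul_pow]
      _ ≤ (d + 1) * 3 ^ d * ((2 * n ^ d) * (2 ^ T) ^ d) := by gcongr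
      _ = 2 * ((d + 1) * 3 ^ d * (n * 2 ^ T) ^ d) := by rw [mul_pow]; ring
      _ < 2 * (2 ^ n * d ^ d) := by
          exact mul_lt_mul_of_pos_left ih (by norm_num)
      _ = 2 ^ (n + 1) * d ^ d := by ring

/-- for the end-token reward class, `VC(R_F) ≤ 6 · T · VC(F)`. -/
theorem vc_rewardET_le_six_T_mul_vc (T d : ℕ) (F : Set (List Bool → Bool))
    (hVC : VCdimLe F d) :
    VCdimLe (rewardClassET F T) (6 * T * d) := by
  intro n xs hSh
  by_contra hcon
  push_neg at hcon
  have hn1 : 0 < n := by omega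
  -- extract, for each sign pattern, a function `f_v ∈ F` realizing it
  have H : ∀ v : Fin n → Bool, ∃ f, f ∈ F ∧ ∀ i,
      decide ((xs i).2.getLastD false = (arList f (xs i).1 T).getLastD false) = v i := by
    intro v
    obtain ⟨h, hm, hv⟩ := hSh v
    obtain ⟨f, hfF, rfl⟩ := hm
    exact ⟨f, hfF, fun i => hv i⟩
  choose fv hfF hfv using H
  set i0 : Fin n := ⟨0, hn1⟩ with hi0
  -- case T = 0
  rcases Nat.eq_zero_or_pos T with rfl | hT
  · have h1 := hfv (fun _ => true) i0
    have h2 := hfv (fun _ => false) i0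
    simp only [arList] at h1 h2
    have h2 : true = false := h1.symm.trans h2
    exact absurd h2 (by simp)
  -- case d = 0
  rcases Nat.eq_zero_or_pos d with rfl | hd
  · have hagree : ∀ f g : List Bool → Bool, f ∈ F → g ∈ F → ∀ z, f z = g z := by
      intro f g hf hg z
      by_contra hne
      have hsh1 : Shatters F (fun _ : Fin 1 => z) := by
        intro v
        have hcases : v 0 = f z ∨ v 0 = g z := by
          cases hb : v 0 <;> cases hfz : f z <;> cases hgz : g z <;> simp_all
        rcases hcases with hb | hb
        · exact ⟨f, hf, fun i => by rw [show i = 0 from Subsingleton.elim i 0] at *; exact hb.symm⟩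
        · exact ⟨g, hg, fun i => by rw [show i = 0 from Subsingleton.elim i 0] at *; exact hb.symm⟩
      have := hVC 1 _ hsh1
      omega
    have h1 := hfv (fun _ => true) i0
    have h2 := hfv (fun _ => false) i0
    have he : arList (fv fun _ => true) (xs i0).1 T = arList (fv fun _ => false) (xs i0).1 T :=
      arList_congr (fun q _ => hagree _ _ (hfF _) (hfF _) _)
    rw [he] at h1
    rw [h1] at h2
    exact absurd h2 (by simp)
  -- main case : T ≥ 1, d ≥ 1
  set Z : Finset (List Bool) :=
    univ.biUnion (fun i : Fin n => (listsLt T).image (fun q => (xs i).1 ++ q)) with hZdef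
  have hZmem : ∀ (i : Fin n) (q : List Bool), q.length < T → (xs i).1 ++ q ∈ Z := by
    intro i q hq
    exact mem_biUnion.2 ⟨i, mem_univ i, mem_image.2 ⟨q, (mem_listsLt T q).2 hq, rfl⟩⟩
  have hZcard : Z.card ≤ n * 2 ^ T := by
    calc Z.card ≤ ∑ i : Fin n, ((listsLt T).image (fun q => (xs i).1 ++ q)).card :=
          card_biUnion_le
      _ ≤ ∑ _i : Fin n, 2 ^ T := by
          apply sum_le_sum
          intro i _
          exact card_image_le.trans (by have := card_listsLt T; omega)
      _ = n * 2 ^ T := by simp [mul_comm]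
  set 𝒜 : Finset (Finset (List Bool)) :=
    Finset.image (fun v : Fin n → Bool => Z.filter (fun z => fv v z = true)) univ with hA
  have hinj : Function.Injective
      (fun v : Fin n → Bool => Z.filter (fun z => fv v z = true)) := by
    intro v w hvw
    funext i
    have hagree : ∀ q : List Bool, q.length < T →
        fv v ((xs i).1 ++ q) = fv w ((xs i).1 ++ q) := by
      intro q hq
      have hz := hZmem i q hq
      have hiff : ((xs i).1 ++ q ∈ Z.filter (fun z => fv v z = true)) ↔
          ((xs i).1 ++ q ∈ Z.filter (fun z => fv w z = true)) := by
        simp only at hvw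
        rw [hvw]
      simp only [mem_filter, hz, true_and] at hiff
      cases hb : fv v ((xs i).1 ++ q) <;> cases hb' : fv w ((xs i).1 ++ q) <;> simp_all
    have he : arList (fv v) ((xs i).1) T = arList (fv w) ((xs i).1) T := arList_congr hagree
    have h1 := hfv v i
    have h2 := hfv w i
    rw [← h1, ← h2, he]
  have hcard : 2 ^ n ≤ 𝒜.card := by
    rw [hA, Finset.card_image_of_injective _ hinj, card_univ]
    simp
  have hSauer : 𝒜.card ≤ 𝒜.shatterer.card := Finset.card_le_card_shatterer 𝒜
  have hsub : 𝒜.shatterer ⊆ (range (d + 1)).biUnion (fun k => Z.powersetCard k) := by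
    intro s hs
    rw [Finset.mem_shatterer] at hs
    have hsZ : s ⊆ Z := by
      obtain ⟨t, ht, hst⟩ := hs.exists_superset
      rw [hA] at ht
      obtain ⟨v, _, rfl⟩ := mem_image.1 ht
      exact hst.trans (filter_subset _ _)
    have hcard_s : s.card ≤ d := by
      set e := s.equivFin with hedef
      apply hVC s.card (fun j => ((e.symm j : List Bool)))
      intro v
      set t : Finset (List Bool) :=
        (univ.filter (fun j => v j = true)).image (fun j => ((e.symm j : List Bool))) with htdef
      have hts : t ⊆ s := by
        intro z hz
        rw [htdef] at hz
        obtain ⟨j, _, rfl⟩ := mem_image.1 hz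
        exact (e.symm j).2
      obtain ⟨u, hu, hsu⟩ := hs hts
      rw [hA] at hu
      obtain ⟨w, _, rfl⟩ := mem_image.1 hu
      refine ⟨fv w, hfF w, ?_⟩
      intro j
      have hjs : ((e.symm j : List Bool)) ∈ s := (e.symm j).2
      have hjZ : ((e.symm j : List Bool)) ∈ Z := hsZ hjs
      have hmem : (((e.symm j : List Bool)) ∈ t) ↔ v j = true := by
        rw [htdef]
        simp only [mem_image, mem_filter, mem_univ, true_and]
        constructor
        · rintro ⟨j', hj', hjj⟩
          have hj'j : j' = j := e.symm.injective (Subtype.ext hjj)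
          rwa [hj'j] at hj'
        · intro hvj
          exact ⟨j, hvj, rfl⟩
      have hmem2 : (((e.symm j : List Bool)) ∈ s ∩ (Z.filter fun z => fv w z = true)) ↔
          (((e.symm j : List Bool)) ∈ t) := by rw [hsu]
      simp only [mem_inter, hjs, true_and, mem_filter, hjZ] at hmem2
      rw [hmem] at hmem2
      cases hb : fv w ((e.symm j : List Bool)) <;> cases hv' : v j <;> simp_all
    exact mem_biUnion.2 ⟨s.card, mem_range.2 (by omega),
      (mem_powersetCard).2 ⟨hsZ, rfl⟩⟩
  have hcount : 𝒜.shatterer.card ≤ ∑ k ∈ range (d + 1), (Z.card).choose k := by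
    calc 𝒜.shatterer.card ≤ ((range (d + 1)).biUnion fun k => Z.powersetCard k).card :=
          card_le_card hsub
      _ ≤ ∑ k ∈ range (d + 1), (Z.powersetCard k).card := card_biUnion_le
      _ = ∑ k ∈ range (d + 1), (Z.card).choose k := by simp [card_powersetCard]
  have hM : ∑ k ∈ range (d + 1), (Z.card).choose k
      ≤ ∑ k ∈ range (d + 1), (n * 2 ^ T).choose k :=
    sum_le_sum (fun k _ => Nat.choose_le_choose k hZcard)
  have h2n : 2 ^ n ≤ ∑ k ∈ range (d + 1), (n * 2 ^ T).choose k :=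
    le_trans hcard (le_trans hSauer (le_trans hcount hM))
  have hdM : d ≤ n * 2 ^ T := by
    have h1 : n ≤ n * 2 ^ T := Nat.le_mul_of_pos_right n (by positivity)
    have h2 : d ≤ 6 * T * d := by nlinarith
    omega
  have hfinal := sum_choose_le (d := d) (M := n * 2 ^ T) hdM
  have hkey := key_ineq T d hT hd n (by omega)
  have hle : 2 ^ n * d ^ d ≤ (d + 1) * 3 ^ d * (n * 2 ^ T) ^ d := by
    calc 2 ^ n * d ^ d ≤ (∑ k ∈ range (d + 1), (n * 2 ^ T).choose k) * d ^ d :=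
          Nat.mul_le_mul_right _ h2n
      _ = d ^ d * ∑ k ∈ range (d + 1), (n * 2 ^ T).choose k := by ring
      _ ≤ (d + 1) * (3 ^ d * (n * 2 ^ T) ^ d) := hfinal
      _ = (d + 1) * 3 ^ d * (n * 2 ^ T) ^ d := by ring
  exact absurd hle (not_le.2 hkey)
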